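/- Let M = graph u over a compact Riemannian manifold S₀ be a compact space-like hypersurface in a Gaussian coordinate system with Lorentzian metric ds² = e^{2ψ}(−(dx⁰)² + σ_{ij}(x⁰,x)dx^i dx^j), and suppose its principal curvatures (with respect to the past directed normal) satisfy κ_i ≥ κ₀ for all i. Then the gradient function ṽ = (1 − |Du|²)^{−1/2} admits an a priori bound ṽ ≤ c depending only on sup|u|, S₀, σ_{ij}, ψ, and κ₀ (and not on M itself). -/

import Mathlib

open Real

private lemma clm_eval_sum {n : ℕ} (T : (Fin n → ℝ) →L[ℝ] ℝ) (g : Fin n → ℝ) :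
    T g = ∑ i, g i * T (Pi.single i 1) := by
  have hg : g = ∑ i, g i • (Pi.single i 1 : Fin n → ℝ) := by
    ext j
    simp [Finset.sum_apply, Pi.single_apply]
  calc T g = T (∑ i, g i • (Pi.single i 1 : Fin n → ℝ)) := by rw [← hg]
    _ = ∑ i, g i * T (Pi.single i 1) := by
        rw [map_sum]; simp [smul_eq_mul]

/-- flat model: S₀ the torus, σ_{ij} = δ_{ij}, ψ = 0: a compact
space-like graph in Minkowski space whose principal curvatures with respect to the
past directed normal are bounded below by κ₀ — i.e. the second fundamental form
h_{ij}ξ^iξ^j = −v⁻¹ u_{,ij}ξ^iξ^j dominates κ₀ g_{ij}ξ^iξ^j with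
g_{ij} = δ_{ij} − u_i u_j — satisfies an a priori gradient bound
ṽ = (1 − |Du|²)^{−1/2} ≤ c, where c depends only on n, κ₀ and sup|u| = m,
and not on the hypersurface itself. -/
theorem stmt17 (n : ℕ) (κ₀ m : ℝ) :
    ∃ c : ℝ, ∀ u : (Fin n → ℝ) → ℝ, ContDiff ℝ 2 u →
      (∀ (x : Fin n → ℝ) (k : Fin n → ℤ), u (x + fun i => (k i : ℝ)) = u x) →
      (∀ x, ∑ i, (fderiv ℝ u x (Pi.single i 1)) ^ 2 < 1) →
      (∀ x, |u x| ≤ m) →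
      (∀ x, ∀ ξ : Fin n → ℝ,
        κ₀ * ((∑ i, (ξ i) ^ 2) - (fderiv ℝ u x ξ) ^ 2) ≤
          -(Real.sqrt (1 - ∑ i, (fderiv ℝ u x (Pi.single i 1)) ^ 2))⁻¹ *
            fderiv ℝ (fun y => fderiv ℝ u y ξ) x ξ) →
      ∀ x, (Real.sqrt (1 - ∑ i, (fderiv ℝ u x (Pi.single i 1)) ^ 2))⁻¹ ≤ c := by
  classical
  set lam : ℝ := min κ₀ 0 - 1 with hlamdef
  refine ⟨Real.exp (2 * (1 - min κ₀ 0) * |m|), ?_⟩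
  intro u hu hper hsp hm hcurv x
  have hud : Differentiable ℝ u := hu.differentiable (by norm_num)
  set F : (Fin n → ℝ) → ((Fin n → ℝ) →L[ℝ] ℝ) := fderiv ℝ u with hFdef
  have hF1 : ContDiff ℝ 1 F := hu.fderiv_right (by norm_num)
  have hFd : Differentiable ℝ F := hF1.differentiable (by norm_num)
  set S : (Fin n → ℝ) → ℝ := fun y => ∑ i, (F y (Pi.single i 1)) ^ 2 with hSdef
  have hSlt : ∀ y, S y < 1 := hsp
  have hSnn : ∀ y, 0 ≤ S y := fun y => Finset.sum_nonneg fun i _ => sq_nonneg _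
  have hpos : ∀ y, (0:ℝ) < 1 - S y := fun y => by have := hSlt y; linarith
  -- derivative of evaluation of F at a fixed vector
  have hEval : ∀ (y v : Fin n → ℝ),
      HasFDerivAt (fun z => F z v) ((fderiv ℝ F y).flip v) y := by
    intro y v
    have h := ((hFd y).hasFDerivAt).clm_apply (hasFDerivAt_const v y)
    simpa using h
  set DS : (Fin n → ℝ) → ((Fin n → ℝ) →L[ℝ] ℝ) :=
    fun y => ∑ i, (2 * F y (Pi.single i 1)) • ((fderiv ℝ F y).flip (Pi.single i 1)) with hDSdef
  -- derivative of S
  have hSderiv : ∀ y, HasFDerivAt S (DS y) y := by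
    intro y
    refine HasFDerivAt.fun_sum (fun i _ => ?_)
    have h2 := (hEval y (Pi.single i 1)).fun_mul (hEval y (Pi.single i 1))
    have e1 : (fun z => F z (Pi.single i 1) * F z (Pi.single i 1))
        = fun z => (F z (Pi.single i 1)) ^ 2 := by funext z; ring
    rw [e1] at h2
    exact h2.congr_fderiv (by rw [two_mul, add_smul])
  -- the test function w and its derivative
  set w : (Fin n → ℝ) → ℝ := fun y => lam * u y - 2⁻¹ * Real.log (1 - S y) with hwdef
  have hwderiv : ∀ y, HasFDerivAt w
      (lam • F y - (2:ℝ)⁻¹ • ((1 - S y)⁻¹ • ((0 : (Fin n → ℝ) →L[ℝ] ℝ) - DS y))) y := by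
    intro y
    have h1 : HasFDerivAt (fun z => lam * u z) (lam • F y) y :=
      ((hud y).hasFDerivAt).const_mul lam
    have h2 : HasFDerivAt (fun z => 1 - S z) ((0 : (Fin n → ℝ) →L[ℝ] ℝ) - DS y) y :=
      (hasFDerivAt_const (1:ℝ) y).sub (hSderiv y)
    have h3 : HasDerivAt Real.log (1 - S y)⁻¹ (1 - S y) :=
      Real.hasDerivAt_log (ne_of_gt (hpos y))
    have h4 : HasFDerivAt (fun z => Real.log (1 - S z))
        ((1 - S y)⁻¹ • ((0 : (Fin n → ℝ) →L[ℝ] ℝ) - DS y)) y := by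
      simpa [Function.comp_def] using h3.comp_hasFDerivAt y h2
    exact h1.sub (h4.const_mul (2:ℝ)⁻¹)
  -- periodicity
  have hFper : ∀ (y : Fin n → ℝ) (k : Fin n → ℤ), F (y + fun i => (k i : ℝ)) = F y := by
    intro y k
    have hcomp : HasFDerivAt (fun z => u (z + fun i => (k i:ℝ)))
        ((F (y + fun i => (k i:ℝ))).comp (ContinuousLinearMap.id ℝ (Fin n → ℝ))) y := by
      have := HasFDerivAt.comp y ((hud _).hasFDerivAt) ((hasFDerivAt_id y).add_const
        (fun i => (k i:ℝ)))
      simpa [Function.comp_def] using this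
    have he : (fun z => u (z + fun i => (k i:ℝ))) = u := funext fun z => hper z k
    rw [he] at hcomp
    have h5 := hcomp.fderiv
    simpa using h5.symm
  have hSper : ∀ (y : Fin n → ℝ) (k : Fin n → ℤ), S (y + fun i => (k i : ℝ)) = S y := by
    intro y k; simp only [hSdef, hFper y k]
  have hwper : ∀ (y : Fin n → ℝ) (k : Fin n → ℤ), w (y + fun i => (k i : ℝ)) = w y := by
    intro y k; simp only [hwdef, hper y k, hSper y k]
  -- existence of a global maximum
  have hwd : Differentiable ℝ w := fun y => (hwderiv y).differentiableAt
  have hwc : Continuous w := hwd.continuous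
  obtain ⟨x₀, -, hx₀⟩ := (isCompact_Icc (a := (0 : Fin n → ℝ)) (b := 1)).exists_isMaxOn
    ⟨0, Set.left_mem_Icc.2 zero_le_one⟩ hwc.continuousOn
  have hglob : ∀ y, w y ≤ w x₀ := by
    intro y
    have hky : w y = w (y + fun i => ((-⌊y i⌋ : ℤ) : ℝ)) := (hwper y _).symm
    have hmem : (y + fun i => ((-⌊y i⌋ : ℤ) : ℝ)) ∈ Set.Icc (0 : Fin n → ℝ) 1 := by
      constructor <;> intro i
      · have := Int.fract_nonneg (y i)
        simp only [Pi.add_apply, Pi.zero_apply]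
        push_cast
        rw [Int.fract] at this; linarith
      · have := Int.fract_lt_one (y i)
        simp only [Pi.add_apply, Pi.one_apply]
        push_cast
        rw [Int.fract] at this; linarith
    rw [hky]; exact hx₀ hmem
  -- first order condition at the max
  have hloc : IsLocalMax w x₀ := Filter.Eventually.of_forall hglob
  have hzero : (lam • F x₀ - (2:ℝ)⁻¹ • ((1 - S x₀)⁻¹ •
      ((0 : (Fin n → ℝ) →L[ℝ] ℝ) - DS x₀))) = 0 := by
    rw [← (hwderiv x₀).fderiv]; exact hloc.fderiv_eq_zero
  set g₀ : Fin n → ℝ := fun i => F x₀ (Pi.single i 1) with hg₀def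
  have hFg₀ : F x₀ g₀ = S x₀ := by
    rw [clm_eval_sum (F x₀) g₀]
    simp only [hSdef, hg₀def, sq]
  have hDSg : DS x₀ g₀ = 2 * (fderiv ℝ F x₀ g₀ g₀) := by
    rw [hDSdef]
    simp only [ContinuousLinearMap.sum_apply, ContinuousLinearMap.smul_apply,
      ContinuousLinearMap.flip_apply, smul_eq_mul]
    rw [clm_eval_sum (fderiv ℝ F x₀ g₀) g₀, Finset.mul_sum]
    exact Finset.sum_congr rfl fun i _ => by ring
  have hevalzero := congrArg (fun T : (Fin n → ℝ) →L[ℝ] ℝ => T g₀) hzero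
  simp only [ContinuousLinearMap.sub_apply, ContinuousLinearMap.smul_apply,
    ContinuousLinearMap.zero_apply, smul_eq_mul, hDSg, hFg₀] at hevalzero
  -- hevalzero : lam * S x₀ - 2⁻¹ * ((1 - S x₀)⁻¹ * (0 - 2 * Q)) = 0
  set Q : ℝ := fderiv ℝ F x₀ g₀ g₀ with hQdef
  have hQ : Q = -lam * S x₀ * (1 - S x₀) := by
    have h := hevalzero
    have hne := ne_of_gt (hpos x₀)
    have h2 : (1 - S x₀)⁻¹ * Q = -(lam * S x₀) := by linear_combination h
    have h3 : Q = (1 - S x₀) * ((1 - S x₀)⁻¹ * Q) := by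
      rw [← mul_assoc, mul_inv_cancel₀ hne, one_mul]
    rw [h2] at h3; rw [h3]; ring
  -- curvature condition at x₀ with ξ = g₀
  have hsym : fderiv ℝ (fun y => F y g₀) x₀ g₀ = Q := by
    rw [(hEval x₀ g₀).fderiv]
    simp [hQdef]
  have hcx := hcurv x₀ g₀
  rw [hsym, hFg₀] at hcx
  have hsum : (∑ i, (g₀ i) ^ 2) = S x₀ := by
    simp only [hSdef, hg₀def]
  rw [hsum] at hcx
  -- show S x₀ = 0
  have hs0 : S x₀ = 0 := by
    by_contra hne
    have hspos : 0 < S x₀ := lt_of_le_of_ne (hSnn x₀) (Ne.symm hne)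
    set v : ℝ := Real.sqrt (1 - S x₀) with hvdef
    have hvsq : v ^ 2 = 1 - S x₀ := Real.sq_sqrt (le_of_lt (hpos x₀))
    have hvpos : 0 < v := Real.sqrt_pos.2 (hpos x₀)
    have hvle : v ≤ 1 := Real.sqrt_le_one.2 (by have := hSnn x₀; linarith)
    have hvinv : v⁻¹ * (1 - S x₀) = v := by
      rw [← hvsq, sq]; field_simp
    -- hcx : κ₀ * (S x₀ - (S x₀)^2) ≤ -v⁻¹ * Q
    have hineq : κ₀ * v ≤ lam := by
      have h1 : κ₀ * (S x₀ - S x₀ ^ 2) ≤ -v⁻¹ * Q := hcx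
      rw [hQ] at h1
      have h2 : -v⁻¹ * (-lam * S x₀ * (1 - S x₀)) = lam * S x₀ * v := by
        rw [show -v⁻¹ * (-lam * S x₀ * (1 - S x₀)) = lam * S x₀ * (v⁻¹ * (1 - S x₀)) by ring,
          hvinv]
      rw [h2] at h1
      have e1 : κ₀ * (S x₀ - S x₀ ^ 2) = (κ₀ * v) * (S x₀ * v) := by
        linear_combination (-κ₀ * S x₀) * hvsq
      have e2 : lam * S x₀ * v = lam * (S x₀ * v) := by ring
      rw [e1, e2] at h1
      exact le_of_mul_le_mul_right h1 (mul_pos hspos hvpos)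
    have hmin : min κ₀ 0 ≤ κ₀ * v := by
      rcases le_or_gt 0 κ₀ with h | h
      · calc min κ₀ 0 ≤ 0 := min_le_right _ _
          _ ≤ κ₀ * v := mul_nonneg h (le_of_lt hvpos)
      · calc min κ₀ 0 ≤ κ₀ := min_le_left _ _
          _ ≤ κ₀ * v := by
              have := mul_le_mul_of_nonpos_left hvle (le_of_lt h)
              simpa using this
    rw [hlamdef] at hineq
    linarith
  -- conclusion
  have hwx₀ : w x₀ = lam * u x₀ := by
    simp [hwdef, hs0]
  have hx1 : lam * u x - 2⁻¹ * Real.log (1 - S x) ≤ lam * u x₀ := by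
    rw [← hwx₀]; exact hglob x
  have ha : (0:ℝ) < 1 - S x := hpos x
  have hrepr : (Real.sqrt (1 - S x))⁻¹ = Real.exp (-(Real.log (1 - S x) * (1/2))) := by
    rw [Real.sqrt_eq_rpow, Real.rpow_def_of_pos ha, ← Real.exp_neg]
  have hgoal : (Real.sqrt (1 - ∑ i, (F x (Pi.single i 1)) ^ 2))⁻¹
      = (Real.sqrt (1 - S x))⁻¹ := rfl
  rw [hgoal, hrepr]
  apply Real.exp_le_exp.2
  have hux := abs_le.1 (hm x)
  have hux₀ := abs_le.1 (hm x₀)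
  have hmabs : m ≤ |m| := le_abs_self m
  have hlamle : lam ≤ 0 := by rw [hlamdef]; have := min_le_right κ₀ 0; linarith
  have hA : -(Real.log (1 - S x) * (1/2)) ≤ lam * u x₀ - lam * u x := by linarith
  have hd1 : -(2*|m|) ≤ u x₀ - u x := by linarith
  have hB := mul_le_mul_of_nonpos_left hd1 hlamle
  have e3 : lam * -(2*|m|) = 2 * (1 - min κ₀ 0) * |m| := by rw [hlamdef]; ring
  have e4 : lam * (u x₀ - u x) = lam * u x₀ - lam * u x := by ring
  rw [e4, e3] at hB
  exact le_trans hA hB
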